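/- Reversal channel commutes with marginalization for a unitary on A (Lemma for I₄-type invariance): let U_A be unitary, V_B an isometry, ρ_A a density operator on A, ω_B a density operator on B, and R(σ) := (U_A ⊗ V_B)† σ (U_A ⊗ V_B) + Tr[(1 − 1_A ⊗ V_B V_B†)σ]·(ρ_A ⊗ ω_B). Then for every density operator σ_AB on the codomain, R(U_A ρ_A U_A† ⊗ σ_B) = ρ_A ⊗ Tr_A[R(σ_AB)], where σ_B := Tr_A[σ_AB]. -/

import Mathlib

open scoped ComplexOrder Kronecker
open Matrix

noncomputable section

/-- A density operator: positive semidefinite with unit trace. -/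
def IsDensity {n : Type*} [Fintype n] (ρ : Matrix n n ℂ) : Prop :=
  ρ.PosSemidef ∧ ρ.trace = 1

/-- Partial trace over the first (A) tensor factor. -/
def ptraceA {a b : Type*} [Fintype a] (M : Matrix (a × b) (a × b) ℂ) : Matrix b b ℂ :=
  Matrix.of fun i j => ∑ k, M (k, i) (k, j)

/-- Partial trace over the second (B) tensor factor. -/
def ptraceB {a b : Type*} [Fintype b] (M : Matrix (a × b) (a × b) ℂ) : Matrix a a ℂ :=
  Matrix.of fun i j => ∑ k, M (i, k) (j, k)

/-- The reversal channel `R(σ) = V†σV + Tr[(1 − VV†)σ]·ω`. -/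
def Reversal {H Ht : Type*} [Fintype H] [Fintype Ht] [DecidableEq Ht]
    (V : Matrix Ht H ℂ) (ω : Matrix H H ℂ) (σ : Matrix Ht Ht ℂ) : Matrix H H ℂ :=
  Vᴴ * σ * V + ((1 - V * Vᴴ) * σ).trace • ω

/-- Complete positivity and trace preservation (a quantum channel), with complete
positivity expressed via positivity of all finite amplifications `id_k ⊗ N`. -/
def IsCPTP {n m : Type*} [Fintype n] [Fintype m]
    (N : Matrix n n ℂ → Matrix m m ℂ) : Prop :=
  IsLinearMap ℂ N ∧ (∀ X, (N X).trace = X.trace) ∧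
  ∀ (k : ℕ) (X : Matrix (Fin k × n) (Fin k × n) ℂ), X.PosSemidef →
    (Matrix.of fun p q : Fin k × m =>
      N (Matrix.of fun a b : n => X (p.1, a) (q.1, b)) p.2 q.2).PosSemidef

open Classical in
/-- Positive-semidefinite square root (defined to be `0` off the PSD cone). -/
def msqrt {n : Type*} [Fintype n] [DecidableEq n] (M : Matrix n n ℂ) : Matrix n n ℂ :=
  if h : M.PosSemidef then
    h.1.eigenvectorUnitary.1 * diagonal ((↑) ∘ (√·) ∘ h.1.eigenvalues) *
      (star h.1.eigenvectorUnitary : Matrix n n ℂ)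
  else 0

/-- Uhlmann fidelity `F(ρ,σ) = (Tr[√(√σ ρ √σ)])²`. -/
def Fidelity {n : Type*} [Fintype n] [DecidableEq n] (ρ σ : Matrix n n ℂ) : ℝ :=
  ((msqrt (msqrt σ * ρ * msqrt σ)).trace).re ^ 2

/-- Sine distance `P(ρ,σ) = √(1 − F(ρ,σ))`. -/
def sineDist {n : Type*} [Fintype n] [DecidableEq n] (ρ σ : Matrix n n ℂ) : ℝ :=
  Real.sqrt (1 - Fidelity ρ σ)

/-- The smoothing ball `B^ε(ρ)` in sine distance. -/
def smoothBall {n : Type*} [Fintype n] [DecidableEq n] (ε : ℝ) (ρ : Matrix n n ℂ) :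
    Set (Matrix n n ℂ) :=
  {σ | IsDensity σ ∧ sineDist ρ σ ≤ ε}

/-- The reversal channel of Lemma 7/8, with trace term `Tr[(1 − 1_A ⊗ V_B V_B†)σ]`. -/
def RevLoc {HA HB HtB : Type*} [Fintype HA] [DecidableEq HA] [Fintype HB]
    [Fintype HtB] [DecidableEq HtB]
    (U : Matrix HA HA ℂ) (VB : Matrix HtB HB ℂ) (ω : Matrix (HA × HB) (HA × HB) ℂ)
    (σ : Matrix (HA × HtB) (HA × HtB) ℂ) : Matrix (HA × HB) (HA × HB) ℂ :=
  (U ⊗ₖ VB)ᴴ * σ * (U ⊗ₖ VB) +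
    ((1 - (1 : Matrix HA HA ℂ) ⊗ₖ (VB * VBᴴ)) * σ).trace • ω

section Aux

set_option linter.unusedSectionVars false
variable {a b : Type*} [Fintype a] [DecidableEq a] [Fintype b]

lemma ptraceA_add (M N : Matrix (a × b) (a × b) ℂ) :
    ptraceA (M + N) = ptraceA M + ptraceA N := by
  ext i j; simp [ptraceA, Finset.sum_add_distrib]

lemma ptraceA_smul (c : ℂ) (M : Matrix (a × b) (a × b) ℂ) :
    ptraceA (c • M) = c • ptraceA M := by
  ext i j; simp [ptraceA, Finset.mul_sum]

lemma ptraceA_kron (ρ : Matrix a a ℂ) (ω : Matrix b b ℂ) :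
    ptraceA (ρ ⊗ₖ ω) = ρ.trace • ω := by
  ext i j
  simp [ptraceA, Matrix.trace, Matrix.diag, Finset.sum_mul]

lemma trace_ptraceA (M : Matrix (a × b) (a × b) ℂ) :
    (ptraceA M).trace = M.trace := by
  simp [ptraceA, Matrix.trace, Matrix.diag, Fintype.sum_prod_type]
  exact Finset.sum_comm

lemma conjTranspose_kron {c d : Type*} (A : Matrix a c ℂ) (B : Matrix b d ℂ) :
    (A ⊗ₖ B)ᴴ = Aᴴ ⊗ₖ Bᴴ := by
  ext i j
  simp [Matrix.conjTranspose_apply]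

lemma trace_one_kron_mul (B : Matrix b b ℂ) (M : Matrix (a × b) (a × b) ℂ) :
    (((1 : Matrix a a ℂ) ⊗ₖ B) * M).trace = (B * ptraceA M).trace := by
  simp only [Matrix.trace, Matrix.diag, Matrix.mul_apply, ptraceA, Matrix.of_apply,
    Fintype.sum_prod_type, Matrix.kroneckerMap_apply, Matrix.one_apply, ite_mul, zero_mul,
    one_mul]
  calc (∑ x : a, ∑ x_1 : b, ∑ x_2 : a, ∑ x_3 : b,
          if x = x_2 then B x_1 x_3 * M (x_2, x_3) (x, x_1) else 0)
      = ∑ x : a, ∑ x_1 : b, ∑ x_3 : b, B x_1 x_3 * M (x, x_3) (x, x_1) := by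
        refine Finset.sum_congr rfl fun x _ => Finset.sum_congr rfl fun x1 _ => ?_
        rw [Finset.sum_comm]
        simp
    _ = ∑ x_1 : b, ∑ x_3 : b, ∑ x : a, B x_1 x_3 * M (x, x_3) (x, x_1) := by
        rw [Finset.sum_comm]
        exact Finset.sum_congr rfl fun x1 _ => Finset.sum_comm
    _ = ∑ x : b, ∑ x_1 : b, B x x_1 * ∑ k : a, M (k, x_1) (k, x) := by
        simp [Finset.mul_sum]


lemma ptraceA_sandwich_entry {c : Type*} [Fintype c] (U : Matrix a a ℂ) (hU2 : U * Uᴴ = 1)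
    (V : Matrix b c ℂ) (σ : Matrix (a × b) (a × b) ℂ) (i j : c) :
    (ptraceA ((Uᴴ ⊗ₖ Vᴴ) * σ * (U ⊗ₖ V))) i j = (Vᴴ * ptraceA σ * V) i j := by
  have huu : ∀ x y : a, (∑ k, star (U x k) * U y k) = if y = x then (1:ℂ) else 0 := by
    intro x y
    have h := congrFun (congrFun hU2 y) x
    simp only [Matrix.mul_apply, Matrix.conjTranspose_apply, Matrix.one_apply] at h
    rw [← h]
    exact Finset.sum_congr rfl fun k _ => mul_comm _ _
  simp only [ptraceA, Matrix.of_apply, Matrix.mul_apply, Fintype.sum_prod_type,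
    Matrix.kroneckerMap_apply, Matrix.conjTranspose_apply]
  simp only [Finset.sum_mul, Finset.mul_sum]
  calc (∑ k : a, ∑ y : a, ∑ q : b, ∑ x : a, ∑ p : b,
          star (U x k) * star (V p i) * σ (x, p) (y, q) * (U y k * V q j))
      = ∑ k : a, ∑ y : a, ∑ x : a, ∑ q : b, ∑ p : b,
          star (U x k) * star (V p i) * σ (x, p) (y, q) * (U y k * V q j) := by
        exact Finset.sum_congr rfl fun k _ => Finset.sum_congr rfl fun y _ => Finset.sum_comm
    _ = ∑ k : a, ∑ x : a, ∑ y : a, ∑ q : b, ∑ p : b,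
          star (U x k) * star (V p i) * σ (x, p) (y, q) * (U y k * V q j) := by
        exact Finset.sum_congr rfl fun k _ => Finset.sum_comm
    _ = ∑ x : a, ∑ k : a, ∑ y : a, ∑ q : b, ∑ p : b,
          star (U x k) * star (V p i) * σ (x, p) (y, q) * (U y k * V q j) :=
        Finset.sum_comm
    _ = ∑ x : a, ∑ y : a, ∑ k : a, ∑ q : b, ∑ p : b,
          star (U x k) * star (V p i) * σ (x, p) (y, q) * (U y k * V q j) := by
        exact Finset.sum_congr rfl fun x _ => Finset.sum_comm
    _ = ∑ x : a, ∑ y : a, (∑ k : a, star (U x k) * U y k) *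
          ∑ q : b, ∑ p : b, star (V p i) * σ (x, p) (y, q) * V q j := by
        refine Finset.sum_congr rfl fun x _ => Finset.sum_congr rfl fun y _ => ?_
        rw [Finset.sum_mul]
        refine Finset.sum_congr rfl fun k _ => ?_
        simp only [Finset.mul_sum]
        exact Finset.sum_congr rfl fun q _ => Finset.sum_congr rfl fun p _ => by ring
    _ = ∑ x : a, ∑ q : b, ∑ p : b, star (V p i) * σ (x, p) (x, q) * V q j := by
        simp only [huu, ite_mul, one_mul, zero_mul]
        refine Finset.sum_congr rfl fun x _ => ?_
        simp
    _ = ∑ q : b, ∑ x : a, ∑ p : b, star (V p i) * σ (x, p) (x, q) * V q j :=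
        Finset.sum_comm
    _ = ∑ q : b, ∑ p : b, ∑ x : a, star (V p i) * σ (x, p) (x, q) * V q j := by
        exact Finset.sum_congr rfl fun q _ => Finset.sum_comm
    _ = ∑ x : b, ∑ x_1 : b, ∑ i_1 : a, star (V x_1 i) * σ (i_1, x_1) (i_1, x) * V x j := rfl

lemma ptraceA_sandwich {c : Type*} [Fintype c] (U : Matrix a a ℂ) (hU2 : U * Uᴴ = 1)
    (V : Matrix b c ℂ) (σ : Matrix (a × b) (a × b) ℂ) :
    ptraceA ((Uᴴ ⊗ₖ Vᴴ) * σ * (U ⊗ₖ V)) = Vᴴ * ptraceA σ * V := by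
  ext i j; exact ptraceA_sandwich_entry U hU2 V σ i j

end Aux

theorem reversal_commutes_marginal
    (HA HB HtB : Type) [Fintype HA] [DecidableEq HA] [Fintype HB] [DecidableEq HB]
    [Fintype HtB] [DecidableEq HtB]
    (U : Matrix HA HA ℂ) (hU1 : Uᴴ * U = 1) (hU2 : U * Uᴴ = 1)
    (VB : Matrix HtB HB ℂ) (hVB : VBᴴ * VB = 1)
    (ρA : Matrix HA HA ℂ) (hρA : IsDensity ρA)
    (ωB : Matrix HB HB ℂ) (hωB : IsDensity ωB)
    (σAB : Matrix (HA × HtB) (HA × HtB) ℂ) (hσAB : IsDensity σAB) :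
    RevLoc U VB (ρA ⊗ₖ ωB) ((U * ρA * Uᴴ) ⊗ₖ ptraceA σAB) =
      ρA ⊗ₖ ptraceA (RevLoc U VB (ρA ⊗ₖ ωB) σAB) := by
  have hσB : (ptraceA σAB).trace = 1 := by rw [trace_ptraceA]; exact hσAB.2
  have hρ1 : ρA.trace = 1 := hρA.2
  have hUρ : (U * ρA * Uᴴ).trace = 1 := by
    rw [Matrix.trace_mul_cycle, hU1, Matrix.one_mul, hρ1]
  have hsand : Uᴴ * (U * ρA * Uᴴ) * U = ρA := by
    simp only [← Matrix.mul_assoc]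
    rw [hU1, Matrix.one_mul, Matrix.mul_assoc, hU1, Matrix.mul_one]
  set W := VB * VBᴴ with hW
  set σB := ptraceA σAB with hσBdef
  have hc : ((1 - (1 : Matrix HA HA ℂ) ⊗ₖ W) * ((U * ρA * Uᴴ) ⊗ₖ σB)).trace =
      ((1 - (1 : Matrix HA HA ℂ) ⊗ₖ W) * σAB).trace := by
    rw [Matrix.sub_mul, Matrix.sub_mul, Matrix.one_mul, Matrix.one_mul,
      Matrix.trace_sub, Matrix.trace_sub, Matrix.trace_kronecker, hUρ, one_mul, hσB,
      hσAB.2, ← Matrix.mul_kronecker_mul, Matrix.one_mul, Matrix.trace_kronecker,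
      hUρ, one_mul, trace_one_kron_mul, ← hσBdef]
  unfold RevLoc
  rw [conjTranspose_kron, ← Matrix.mul_kronecker_mul, ← Matrix.mul_kronecker_mul,
    hsand, hc, ptraceA_add, ptraceA_smul,
    ptraceA_sandwich U hU2 VB σAB, ← hσBdef, ptraceA_kron, hρ1, one_smul,
    Matrix.kronecker_add, Matrix.kronecker_smul]


end
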